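/- Let A be a 5×5 real symmetric entrywise nonnegative matrix with trace zero and eigenvalues λ_1 ≥ λ_2 ≥ λ_3 ≥ λ_4 ≥ λ_5. Then λ_2 + λ_5 ≤ 0. -/

import Mathlib

set_option maxRecDepth 8000

open Polynomial Matrix

private lemma mn_charpoly_conj (U M V : Matrix (Fin 5) (Fin 5) ℝ) (h1 : U * V = 1) :
    (U * M * V).charpoly = M.charpoly := by
  unfold Matrix.charpoly
  have hmap : U.map C * V.map C = 1 := by
    rw [← Matrix.map_mul, h1, Matrix.map_one _ (map_zero C) (map_one C)]
  have key : charmatrix (U * M * V) = U.map C * charmatrix M * V.map C := by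
    rw [charmatrix, charmatrix, Matrix.scalar_apply]
    rw [mul_sub, sub_mul]
    congr 1
    · have hd : Matrix.diagonal (fun _ : Fin 5 => (X : ℝ[X]))
          = (X : ℝ[X]) • (1 : Matrix (Fin 5) (Fin 5) ℝ[X]) := by
        rw [Matrix.smul_one_eq_diagonal]
      rw [hd, Matrix.mul_smul, smul_mul_assoc, mul_one, hmap]
    · simp only [RingHom.mapMatrix_apply]
      rw [← Matrix.map_mul, ← Matrix.map_mul]
  rw [key, Matrix.det_mul, Matrix.det_mul]
  have hdet : (U.map C).det * (V.map C).det = 1 := by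
    rw [← Matrix.det_mul, hmap, Matrix.det_one]
  calc (U.map C).det * (charmatrix M).det * (V.map C).det
      = (charmatrix M).det * ((U.map C).det * (V.map C).det) := by ring
    _ = (charmatrix M).det := by rw [hdet, mul_one]

private lemma mn_charpoly_diagonal (d : Fin 5 → ℝ) :
    (Matrix.diagonal d).charpoly = ∏ i, (X - C (d i)) := by
  rw [Matrix.charpoly]
  have h : charmatrix (Matrix.diagonal d) = Matrix.diagonal (fun i => X - C (d i)) := by
    ext i j
    by_cases h : i = j
    · subst h; simp [charmatrix_apply_eq]
    · simp [charmatrix_apply_ne _ _ _ h, Matrix.diagonal_apply_ne _ h,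
        Matrix.diagonal_apply_ne d h]
  rw [h, Matrix.det_diagonal]

private lemma mn_exists_balanced (x y : Fin 5 → ℝ) :
    ∃ c s : ℝ, c ^ 2 + s ^ 2 = 1 ∧
      (Finset.univ.filter (fun i => 0 < c * x i + s * y i)).card ≤ 2 ∧
      (Finset.univ.filter (fun i => c * x i + s * y i < 0)).card ≤ 2 := by
  by_contra hcon
  push_neg at hcon
  set f : ℝ → Fin 5 → ℝ := fun t i => Real.cos t * x i + Real.sin t * y i with hf
  have hcont : ∀ i, Continuous (fun t => f t i) := by
    intro i; exact (Real.continuous_cos.mul continuous_const).add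
      (Real.continuous_sin.mul continuous_const)
  set U : Set ℝ := {t | 3 ≤ (Finset.univ.filter (fun i => 0 < f t i)).card} with hU
  set V : Set ℝ := {t | 3 ≤ (Finset.univ.filter (fun i => f t i < 0)).card} with hV
  have hopen : ∀ (g : ℝ → Fin 5 → ℝ), (∀ i, Continuous fun t => g t i) →
      IsOpen {t | 3 ≤ (Finset.univ.filter (fun i => 0 < g t i)).card} := by
    intro g hg
    rw [isOpen_iff_mem_nhds]
    intro t0 ht0
    have hO : IsOpen (⋂ i ∈ (Finset.univ.filter (fun i => 0 < g t0 i)), {t | 0 < g t i}) := by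
      apply isOpen_biInter_finset
      intro i _
      exact isOpen_lt continuous_const (hg i)
    apply Filter.mem_of_superset (hO.mem_nhds ?_)
    · intro t ht
      simp only [Set.mem_iInter] at ht
      refine le_trans ht0 (Finset.card_le_card ?_)
      intro i hi
      simp only [Finset.mem_filter, Finset.mem_univ, true_and] at hi ⊢
      exact ht i (by simp [Finset.mem_filter, hi])
    · simp only [Set.mem_iInter]
      intro i hi
      exact (Finset.mem_filter.mp hi).2
  have hUopen : IsOpen U := hopen f hcont
  have hVopen : IsOpen V := by
    have := hopen (fun t i => - f t i) (fun i => (hcont i).neg)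
    convert this using 2 with t
    simp [hV, neg_pos]
  have hcover : ∀ t : ℝ, t ∈ U ∪ V := by
    intro t
    have h1 : (Real.cos t) ^ 2 + (Real.sin t) ^ 2 = 1 := by
      rw [add_comm]; exact Real.sin_sq_add_cos_sq t
    by_cases h : 3 ≤ (Finset.univ.filter (fun i => 0 < f t i)).card
    · left; exact h
    · right
      have h2 : (Finset.univ.filter (fun i => 0 < f t i)).card ≤ 2 := by omega
      have := hcon (Real.cos t) (Real.sin t) h1 h2
      exact this
  have hflip : ∀ t : ℝ, f (t + Real.pi) = fun i => - f t i := by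
    intro t; funext i
    simp [hf, Real.cos_add_pi, Real.sin_add_pi]; ring
  have hUV : ∀ t, t ∈ U → t + Real.pi ∈ V := by
    intro t ht
    simp only [hV, Set.mem_setOf_eq, hflip t]
    simpa [hU, neg_pos] using ht
  have hVU : ∀ t, t ∈ V → t + Real.pi ∈ U := by
    intro t ht
    simp only [hU, Set.mem_setOf_eq, hflip t]
    simpa [hV] using ht
  have hUne : (Set.univ ∩ U).Nonempty := by
    rcases hcover 0 with h | h
    · exact ⟨0, trivial, h⟩
    · exact ⟨0 + Real.pi, trivial, hVU 0 h⟩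
  have hVne : (Set.univ ∩ V).Nonempty := by
    rcases hcover 0 with h | h
    · exact ⟨0 + Real.pi, trivial, hUV 0 h⟩
    · exact ⟨0, trivial, h⟩
  obtain ⟨t, -, htU, htV⟩ := isPreconnected_univ (u := U) (v := V) hUopen hVopen
    (fun t _ => hcover t) hUne hVne
  have hdisj : Disjoint (Finset.univ.filter (fun i => 0 < f t i))
      (Finset.univ.filter (fun i => f t i < 0)) := by
    rw [Finset.disjoint_filter]
    intro i _ h1
    exact not_lt.mpr (le_of_lt h1)
  have hle : ((Finset.univ.filter (fun i => 0 < f t i))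
      ∪ (Finset.univ.filter (fun i => f t i < 0))).card ≤ 5 := by
    calc _ ≤ (Finset.univ : Finset (Fin 5)).card := Finset.card_le_card (Finset.subset_univ _)
      _ = 5 := by simp
  rw [Finset.card_union_of_disjoint hdisj] at hle
  simp only [hU, Set.mem_setOf_eq] at htU
  simp only [hV, Set.mem_setOf_eq] at htV
  omega
theorem mcdonald_neumann_trace_zero
    (A : Matrix (Fin 5) (Fin 5) ℝ) (hsym : A.IsSymm) (hnn : ∀ i j, 0 ≤ A i j)
    (htr : A.trace = 0)
    (lam : Fin 5 → ℝ) (hmono : ∀ i j : Fin 5, i ≤ j → lam j ≤ lam i)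
    (hspec : A.charpoly = ∏ i : Fin 5, (X - C (lam i))) :
    lam 1 + lam 4 ≤ 0 := by
  classical
  -- zero diagonal
  have hdiag : ∀ i, A i i = 0 := by
    have hsum : ∑ i, A i i = 0 := htr
    intro i
    exact (Finset.sum_eq_zero_iff_of_nonneg (fun j _ => hnn j j)).mp hsum i (Finset.mem_univ i)
  have hA : A.IsHermitian := by
    rw [Matrix.IsHermitian, Matrix.conjTranspose_eq_transpose_of_trivial]; exact hsym
  set U := (hA.eigenvectorUnitary : Matrix (Fin 5) (Fin 5) ℝ) with hUdef
  set eig := hA.eigenvalues with heigdef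
  have hspecA : A = U * diagonal eig * star U := by
    simpa using hA.spectral_theorem
  have hU1 : U * star U = 1 := (Matrix.mem_unitaryGroup_iff).mp hA.eigenvectorUnitary.2
  have hU2 : star U * U = 1 := (Matrix.mem_unitaryGroup_iff').mp hA.eigenvectorUnitary.2
  have hT : star U = Uᵀ := by
    rw [Matrix.star_eq_conjTranspose, Matrix.conjTranspose_eq_transpose_of_trivial]
  -- charpoly of A in terms of eig
  have hcp2 : A.charpoly = ∏ i, (X - C (eig i)) := by
    conv_lhs => rw [hspecA]
    rw [mn_charpoly_conj U _ (star U) hU1, mn_charpoly_diagonal]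
  have hprod : ∏ i : Fin 5, (X - C (lam i)) = ∏ i : Fin 5, (X - C (eig i)) := by
    rw [← hspec, hcp2]
  -- multiset equality of lam and eig
  have hms : (Finset.univ.val.map lam) = (Finset.univ.val.map eig) := by
    have h1 : ∀ f : Fin 5 → ℝ, (∏ i : Fin 5, (X - C (f i))) =
        ((Finset.univ.val.map f).map (fun a => X - C a)).prod := by
      intro f; rw [Multiset.map_map]; rfl
    have h2 := congrArg Polynomial.roots hprod
    rwa [h1 lam, h1 eig, Polynomial.roots_multiset_prod_X_sub_C,
      Polynomial.roots_multiset_prod_X_sub_C] at h2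
  have hlow : ∀ k, lam 4 ≤ eig k := by
    intro k
    have hk : eig k ∈ Finset.univ.val.map lam := by
      rw [hms]; exact Multiset.mem_map_of_mem _ (Finset.mem_univ_val k)
    obtain ⟨i, _, hi⟩ := Multiset.mem_map.mp hk
    rw [← hi]; exact hmono i 4 (Fin.le_last i)
  obtain ⟨k0, l0, hkl, hk0, hl0⟩ :
      ∃ k l, k ≠ l ∧ lam 1 ≤ eig k ∧ lam 1 ≤ eig l := by
    have hcard : 2 ≤ (Finset.univ.filter (fun k => lam 1 ≤ eig k)).card := by
      have e1 : (Finset.univ.filter (fun k => lam 1 ≤ eig k)).card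
          = Multiset.countP (fun x => lam 1 ≤ x) (Finset.univ.val.map eig) := by
        rw [Multiset.countP_map]; rfl
      have e2 : (Finset.univ.filter (fun k => lam 1 ≤ lam k)).card
          = Multiset.countP (fun x => lam 1 ≤ x) (Finset.univ.val.map lam) := by
        rw [Multiset.countP_map]; rfl
      have sub : ({0, 1} : Finset (Fin 5)) ⊆ Finset.univ.filter (fun k => lam 1 ≤ lam k) := by
        intro i hi
        simp only [Finset.mem_insert, Finset.mem_singleton] at hi
        rcases hi with rfl | rfl <;> simp [Finset.mem_filter]
        · exact hmono 0 1 (by decide)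
      have hcc : ({0,1} : Finset (Fin 5)).card ≤ _ := Finset.card_le_card sub
      rw [e1, ← hms, ← e2]
      simpa using hcc
    obtain ⟨k, hk, l, hl, hkl⟩ := Finset.one_lt_card.mp hcard
    exact ⟨k, l, hkl, (Finset.mem_filter.mp hk).2, (Finset.mem_filter.mp hl).2⟩
  -- eigenvector columns
  set v : Fin 5 → Fin 5 → ℝ := fun k i => U i k with hvdef
  have hAU : A * U = U * diagonal eig := by
    conv_lhs => rw [hspecA]
    rw [mul_assoc, mul_assoc, hU2, mul_one]
  have heig : ∀ k, A *ᵥ v k = eig k • v k := by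
    intro k; funext i
    have h1 : (A * U) i k = (U * diagonal eig) i k := by rw [hAU]
    rw [Matrix.mul_diagonal] at h1
    have h2 : (A *ᵥ v k) i = (A * U) i k := by
      simp [Matrix.mulVec, Matrix.mul_apply, dotProduct, hvdef]
    rw [h2, h1]
    simp [hvdef, mul_comm]
  have hortho : ∀ k l, v k ⬝ᵥ v l = if k = l then (1:ℝ) else 0 := by
    intro k l
    have h1 : (star U * U) k l = (1 : Matrix (Fin 5) (Fin 5) ℝ) k l := by rw [hU2]
    rw [hT] at h1
    rw [Matrix.mul_apply] at h1
    simp only [Matrix.transpose_apply] at h1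
    rw [Matrix.one_apply] at h1
    simpa [dotProduct, hvdef] using h1
  -- quadratic form lower bound by smallest eigenvalue
  have hquad : ∀ w : Fin 5 → ℝ, lam 4 * (w ⬝ᵥ w) ≤ w ⬝ᵥ (A *ᵥ w) := by
    intro w
    set cc : Fin 5 → ℝ := (star U) *ᵥ w with hcc
    have hwc : U *ᵥ cc = w := by
      rw [hcc, Matrix.mulVec_mulVec, hU1, Matrix.one_mulVec]
    have hform : w ⬝ᵥ (A *ᵥ w) = ∑ k, eig k * (cc k)^2 := by
      conv_lhs => rw [hspecA]
      rw [← Matrix.mulVec_mulVec, ← Matrix.mulVec_mulVec]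
      rw [Matrix.dotProduct_mulVec w U _]
      have hvm : w ᵥ* U = cc := by rw [← Matrix.mulVec_transpose, ← hT, hcc]
      rw [hvm]
      simp only [dotProduct, Matrix.mulVec_diagonal]
      congr 1; funext k; ring
    have hnorm : w ⬝ᵥ w = ∑ k, (cc k)^2 := by
      conv_lhs => rw [← hwc]
      rw [Matrix.dotProduct_mulVec]
      have hvm : (U *ᵥ cc) ᵥ* U = cc := by
        rw [← Matrix.mulVec_transpose, ← hT, Matrix.mulVec_mulVec, hU2, Matrix.one_mulVec]
      rw [hvm]
      simp only [dotProduct]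
      congr 1; funext k; ring
    rw [hform, hnorm, Finset.mul_sum]
    apply Finset.sum_le_sum
    intro k _
    have := hlow k
    nlinarith [sq_nonneg (cc k)]
  -- maximal off-diagonal entry
  obtain ⟨p, -, hp⟩ := Finset.exists_max_image (Finset.univ : Finset (Fin 5 × Fin 5))
    (fun q => if q.1 = q.2 then 0 else A q.1 q.2) ⟨(0,1), Finset.mem_univ _⟩
  set m : ℝ := if p.1 = p.2 then 0 else A p.1 p.2 with hmdef
  have hm0 : 0 ≤ m := by
    have := hp (0, 0) (Finset.mem_univ _)
    simpa using this
  have hmax : ∀ i j, i ≠ j → A i j ≤ m := by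
    intro i j hij
    have := hp (i, j) (Finset.mem_univ _)
    simpa [hij] using this
  obtain ⟨i0, j0, hij0, hm : A i0 j0 = m⟩ :
      ∃ i j, i ≠ j ∧ A i j = m := by
    by_cases hpp : p.1 = p.2
    · have hm' : m = 0 := by simp [hmdef, hpp]
      refine ⟨0, 1, by decide, le_antisymm ?_ ?_⟩
      · rw [hm']; exact hm'.symm ▸ (hmax 0 1 (by decide)).trans (le_of_eq rfl)
      · rw [hm']; exact hnn 0 1
    · exact ⟨p.1, p.2, hpp, by simp [hmdef, hpp]⟩
  -- lam 4 ≤ -m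
  have h4 : lam 4 ≤ -m := by
    set w : Fin 5 → ℝ := (Pi.single i0 1 : Fin 5 → ℝ) - Pi.single j0 1 with hwdef
    have hsymm' : A j0 i0 = A i0 j0 := by
      have := congrFun (congrFun hsym i0) j0
      simpa [Matrix.transpose_apply] using this
    have hww : w ⬝ᵥ w = 2 := by
      rw [hwdef]
      rw [sub_dotProduct, dotProduct_sub, dotProduct_sub]
      rw [single_dotProduct, single_dotProduct, single_dotProduct,
        single_dotProduct]
      rw [Pi.single_eq_same, Pi.single_eq_same,
        Pi.single_eq_of_ne hij0.symm, Pi.single_eq_of_ne hij0]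
      ring
    have hwAw : w ⬝ᵥ (A *ᵥ w) = -(2*m) := by
      rw [hwdef]
      rw [Matrix.mulVec_sub, Matrix.mulVec_single_one, Matrix.mulVec_single_one]
      rw [sub_dotProduct, dotProduct_sub, dotProduct_sub]
      rw [single_dotProduct, single_dotProduct, single_dotProduct,
        single_dotProduct]
      simp only [Matrix.col_apply]
      rw [hdiag i0, hdiag j0, hsymm', hm]
      ring
    have := hquad w
    rw [hww, hwAw] at this
    linarith
  -- balanced vector in the span of the two top eigenvectors
  obtain ⟨c, s, hcs, hpos, hneg⟩ := mn_exists_balanced (v k0) (v l0)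
  set z : Fin 5 → ℝ := fun i => c * v k0 i + s * v l0 i with hzdef
  have hz' : z = c • v k0 + s • v l0 := by
    funext i; simp [hzdef]
  -- z is a unit vector
  have hz1 : z ⬝ᵥ z = 1 := by
    rw [hz']
    rw [add_dotProduct, smul_dotProduct, smul_dotProduct,
      dotProduct_add, dotProduct_add,
      dotProduct_smul, dotProduct_smul, dotProduct_smul,
      dotProduct_smul]
    rw [hortho k0 k0, hortho k0 l0, hortho l0 k0, hortho l0 l0]
    simp [hkl, hkl.symm, if_neg]
    nlinarith [hcs]
  -- Rayleigh quotient of z is at least lam 1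
  have hzR : lam 1 ≤ z ⬝ᵥ (A *ᵥ z) := by
    have hAz : A *ᵥ z = (c * eig k0) • v k0 + (s * eig l0) • v l0 := by
      rw [hz', Matrix.mulVec_add, Matrix.mulVec_smul, Matrix.mulVec_smul,
        heig k0, heig l0, smul_smul, smul_smul]
    rw [hAz, hz']
    rw [add_dotProduct, smul_dotProduct, smul_dotProduct,
      dotProduct_add, dotProduct_add,
      dotProduct_smul, dotProduct_smul, dotProduct_smul,
      dotProduct_smul]
    rw [hortho k0 k0, hortho k0 l0, hortho l0 k0, hortho l0 l0]
    simp only [hkl, hkl.symm, if_neg, if_pos, smul_eq_mul, mul_one, mul_zero, add_zero, zero_add,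
      if_true, if_false]
    have h1 : (c ^ 2 + s ^ 2) * lam 1 = lam 1 := by rw [hcs, one_mul]
    linarith [mul_nonneg (sq_nonneg c) (sub_nonneg.mpr hk0),
      mul_nonneg (sq_nonneg s) (sub_nonneg.mpr hl0), h1]
  -- Rayleigh quotient of z is at most m
  have hzU : z ⬝ᵥ (A *ᵥ z) ≤ m := by
    set zp : Fin 5 → ℝ := fun i => max (z i) 0 with hzp
    set zn : Fin 5 → ℝ := fun i => max (-z i) 0 with hzn
    have hzp0 : ∀ i, 0 ≤ zp i := fun i => le_max_right _ _
    have hzn0 : ∀ i, 0 ≤ zn i := fun i => le_max_right _ _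
    have hdec : ∀ i, z i = zp i - zn i := by
      intro i
      rcases le_total 0 (z i) with h | h
      · rw [hzp, hzn]
        simp only []
        rw [max_eq_left h, max_eq_right (neg_nonpos.mpr h)]
        ring
      · rw [hzp, hzn]
        simp only []
        rw [max_eq_right h, max_eq_left (neg_nonneg.mpr h)]
        ring
    have hmul : ∀ i, zp i * zn i = 0 := by
      intro i
      rcases le_total 0 (z i) with h | h
      · rw [hzn]; simp only []
        rw [max_eq_right (neg_nonpos.mpr h), mul_zero]
      · rw [hzp]; simp only []
        rw [max_eq_right h, zero_mul]
    have hsq : ∀ i, z i ^ 2 = zp i ^ 2 + zn i ^ 2 := by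
      intro i
      calc z i ^ 2 = (zp i - zn i) ^ 2 := by rw [← hdec i]
        _ = zp i ^ 2 + zn i ^ 2 - 2 * (zp i * zn i) := by ring
        _ = zp i ^ 2 + zn i ^ 2 := by rw [hmul i]; ring
    have hterm : ∀ i j, z i * (A i j * z j)
        ≤ m * (zp i * zp j + zn i * zn j) - (if i = j then m * (z i) ^ 2 else 0) := by
      intro i j
      by_cases hij : i = j
      · subst hij
        rw [if_pos rfl, hdiag i]
        nlinarith [hsq i]
      · rw [if_neg hij]
        have hAm := hmax i j hij
        have hA0 := hnn i j
        rw [hdec i, hdec j]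
        nlinarith [mul_nonneg (mul_nonneg (sub_nonneg.mpr hAm) (hzp0 i)) (hzp0 j),
          mul_nonneg (mul_nonneg (sub_nonneg.mpr hAm) (hzn0 i)) (hzn0 j),
          mul_nonneg (mul_nonneg hA0 (hzp0 i)) (hzn0 j),
          mul_nonneg (mul_nonneg hA0 (hzn0 i)) (hzp0 j)]
    have expand : z ⬝ᵥ (A *ᵥ z) = ∑ i, ∑ j, z i * (A i j * z j) := by
      simp [dotProduct, Matrix.mulVec, Finset.mul_sum]
    have step1 : z ⬝ᵥ (A *ᵥ z)
        ≤ ∑ i, ∑ j, (m * (zp i * zp j + zn i * zn j) - (if i = j then m * (z i) ^ 2 else 0)) := by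
      rw [expand]
      exact Finset.sum_le_sum (fun i _ => Finset.sum_le_sum (fun j _ => hterm i j))
    have e1 : ∀ f : Fin 5 → ℝ, ∑ i, ∑ j, m * (f i * f j) = m * (∑ i, f i) ^ 2 := by
      intro f
      rw [sq, Finset.sum_mul_sum, Finset.mul_sum]
      exact Finset.sum_congr rfl (fun i _ => by rw [Finset.mul_sum])
    have hznorm : ∑ i, z i ^ 2 = 1 := by
      have : ∑ i, z i * z i = 1 := hz1
      simpa [sq] using this
    have step2 : ∑ i, ∑ j, (m * (zp i * zp j + zn i * zn j) - (if i = j then m * (z i) ^ 2 else 0))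
        = m * (∑ i, zp i) ^ 2 + m * (∑ i, zn i) ^ 2 - m := by
      have edi : ∀ i : Fin 5, ∑ j, (if i = j then m * (z i) ^ 2 else 0) = m * (z i) ^ 2 := by
        intro i
        rw [Finset.sum_ite_eq]
        simp
      calc ∑ i, ∑ j, (m * (zp i * zp j + zn i * zn j) - (if i = j then m * (z i) ^ 2 else 0))
          = ∑ i, ((∑ j, m * (zp i * zp j) + ∑ j, m * (zn i * zn j))
              - ∑ j, (if i = j then m * (z i) ^ 2 else 0)) := by
            apply Finset.sum_congr rfl
            intro i _
            rw [← Finset.sum_add_distrib, ← Finset.sum_sub_distrib]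
            apply Finset.sum_congr rfl
            intro j _
            ring_nf
        _ = (∑ i, ∑ j, m * (zp i * zp j)) + (∑ i, ∑ j, m * (zn i * zn j))
            - ∑ i, m * (z i) ^ 2 := by
            rw [← Finset.sum_add_distrib, ← Finset.sum_sub_distrib]
            exact Finset.sum_congr rfl (fun i _ => by rw [edi i])
        _ = m * (∑ i, zp i) ^ 2 + m * (∑ i, zn i) ^ 2 - m := by
            rw [e1 zp, e1 zn, ← Finset.mul_sum, hznorm, mul_one]
    have hkey : ∀ (zz : Fin 5 → ℝ), (∀ i, 0 ≤ zz i) → ∀ (P : Finset (Fin 5)), P.card ≤ 2 →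
        (∀ i, i ∉ P → zz i = 0) → (∑ i, zz i) ^ 2 ≤ 2 * ∑ i, (zz i) ^ 2 := by
      intro zz hzz0 P hcard hout
      have h1 : ∑ i, zz i = ∑ i ∈ P, zz i :=
        (Finset.sum_subset (Finset.subset_univ P) (fun i _ hi => hout i hi)).symm
      have h2 : (∑ i ∈ P, zz i) ^ 2 ≤ (P.card : ℝ) * ∑ i ∈ P, (zz i) ^ 2 :=
        sq_sum_le_card_mul_sum_sq
      have h3 : ∑ i ∈ P, (zz i) ^ 2 ≤ ∑ i, (zz i) ^ 2 :=
        Finset.sum_le_sum_of_subset_of_nonneg (Finset.subset_univ P)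
          (fun i _ _ => sq_nonneg _)
      have h4 : (P.card : ℝ) ≤ 2 := by exact_mod_cast hcard
      have h5 : (0:ℝ) ≤ ∑ i ∈ P, (zz i) ^ 2 := Finset.sum_nonneg (fun i _ => sq_nonneg _)
      calc (∑ i, zz i) ^ 2 = (∑ i ∈ P, zz i) ^ 2 := by rw [h1]
        _ ≤ (P.card : ℝ) * ∑ i ∈ P, (zz i) ^ 2 := h2
        _ ≤ 2 * ∑ i, (zz i) ^ 2 := mul_le_mul h4 h3 h5 (by norm_num)
    have hzpS : (∑ i, zp i) ^ 2 ≤ 2 * ∑ i, (zp i) ^ 2 := by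
      apply hkey zp hzp0 (Finset.univ.filter (fun i => 0 < c * v k0 i + s * v l0 i)) hpos
      intro i hi
      simp only [Finset.mem_filter, Finset.mem_univ, true_and, not_lt] at hi
      rw [hzp]
      simp only []
      exact max_eq_right hi
    have hznS : (∑ i, zn i) ^ 2 ≤ 2 * ∑ i, (zn i) ^ 2 := by
      apply hkey zn hzn0 (Finset.univ.filter (fun i => c * v k0 i + s * v l0 i < 0)) hneg
      intro i hi
      simp only [Finset.mem_filter, Finset.mem_univ, true_and, not_lt] at hi
      rw [hzn]
      simp only []
      exact max_eq_right (neg_nonpos.mpr hi)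
    have hsplit : (∑ i, (zp i) ^ 2) + (∑ i, (zn i) ^ 2) = 1 := by
      rw [← Finset.sum_add_distrib, ← hznorm]
      exact (Finset.sum_congr rfl (fun i _ => (hsq i).symm))
    have hfin : m * (∑ i, zp i) ^ 2 + m * (∑ i, zn i) ^ 2 - m ≤ m := by
      have h6 : m * ((∑ i, (zp i) ^ 2) + (∑ i, (zn i) ^ 2)) = m := by rw [hsplit, mul_one]
      have h7 := mul_le_mul_of_nonneg_left hzpS hm0
      have h8 := mul_le_mul_of_nonneg_left hznS hm0
      linarith [h6, h7, h8]
    calc z ⬝ᵥ (A *ᵥ z) ≤ _ := step1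
      _ = m * (∑ i, zp i) ^ 2 + m * (∑ i, zn i) ^ 2 - m := step2
      _ ≤ m := hfin
  linarith
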